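/- Let A and A′ be commutative noetherian rings, T a ring, N a finitely generated A-module, f:A→A′ a ring homomorphism, and ψ_A:T→End_A(N) a ring homomorphism. Let ψ_{A′}:T→End_{A′}(N⊗_AA′) be the composition of ψ_A with the natural base-change map End_A(N)→End_{A′}(N⊗_AA′) induced by f. Let T_A⊆End_A(N) be the A-subalgebra generated by the image of ψ_A, and T_{A′}⊆End_{A′}(N⊗_AA′) the A′-subalgebra generated by the image of ψ_{A′}. Then the natural A′-linear ring map T_A⊗_AA′→T_{A′} is surjective and its kernel is a nilpotent ideal; if moreover f is flat, this map is an isomorphism. -/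

import Mathlib

set_option synthInstance.maxHeartbeats 2000000
set_option maxHeartbeats 2000000

open scoped TensorProduct

universe u

namespace HeckeBaseChangeAux

variable {A : Type u} [CommRing A]
  {N : Type u} [AddCommGroup N] [Module A N]

/-- The generic base-change comparison map. -/
noncomputable def phiD (TA : Subalgebra A (Module.End A N)) (D : Type u) [CommRing D]
    [Algebra A D] : (D ⊗[A] ↥TA) →ₐ[D] Module.End D (D ⊗[A] N) :=
  Algebra.TensorProduct.lift
    (Algebra.ofId D (Module.End D (D ⊗[A] N)))
    ((Module.End.baseChangeHom A D N).comp TA.val)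
    (fun x y => Algebra.commutes x _)

variable (TA : Subalgebra A (Module.End A N)) {k : ℕ} (v : Fin k → N)

noncomputable def iotaB : ↥TA →ₗ[A] (Fin k → N) :=
  LinearMap.pi fun i => (LinearMap.applyₗ (v i)).comp TA.val.toLinearMap

@[simp] lemma iotaB_apply (b : ↥TA) (i : Fin k) :
    iotaB TA v b i = (b : Module.End A N) (v i) := rfl

lemma iotaB_injective (hv : Submodule.span A (Set.range v) = ⊤) :
    Function.Injective (iotaB TA v) := by
  intro b c h
  apply Subtype.ext
  apply LinearMap.ext
  intro m
  have hm : m ∈ Submodule.span A (Set.range v) := hv ▸ Submodule.mem_top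
  induction hm using Submodule.span_induction with
  | mem z hz =>
      obtain ⟨i, rfl⟩ := hz
      have := congrFun h i
      simpa using this
  | zero => simp
  | add y z _ _ hy hz => simp [map_add, hy, hz]
  | smul a y _ hy => simp [map_smul, hy]

lemma phiD_tmul (D : Type u) [CommRing D] [Algebra A D] (d : D) (b : ↥TA) :
    phiD TA D (d ⊗ₜ[A] b) =
      d • LinearMap.baseChange D (b : Module.End A N) := by
  rw [phiD]
  erw [Algebra.TensorProduct.lift_tmul]
  ext w
  simp [Algebra.ofId_apply, Module.algebraMap_end_apply, Module.End.mul_apply,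
    Module.End.baseChangeHom, AlgHom.ofLinearMap_apply]
  rfl

lemma phiD_component (D : Type u) [CommRing D] [Algebra A D] (x : D ⊗[A] ↥TA) (i : Fin k) :
    phiD TA D x ((1 : D) ⊗ₜ[A] v i)
      = (LinearMap.proj i : (Fin k → N) →ₗ[A] N).baseChange D
          ((iotaB TA v).baseChange D x) := by
  induction x using TensorProduct.induction_on with
  | zero => simp
  | tmul d b =>
      rw [phiD_tmul]
      simp only [LinearMap.baseChange_tmul, LinearMap.smul_apply, iotaB_apply,
        LinearMap.proj_apply]
      rw [TensorProduct.smul_tmul']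
      simp [iotaB_apply]
  | add y z hy hz =>
      simp only [map_add, LinearMap.add_apply, hy, hz]

lemma tensor_pi_eq_sum (D : Type u) [CommRing D] [Algebra A D]
    (w : D ⊗[A] (Fin k → N)) :
    w = ∑ i : Fin k,
      (LinearMap.single A (fun _ : Fin k => N) i).baseChange D
        ((LinearMap.proj i : (Fin k → N) →ₗ[A] N).baseChange D w) := by
  induction w using TensorProduct.induction_on with
  | zero => simp
  | tmul d f =>
      simp only [LinearMap.baseChange_tmul, LinearMap.proj_apply]
      rw [← TensorProduct.tmul_sum]
      congr 1
      have : ∀ i, (LinearMap.single A (fun _ : Fin k => N) i) (f i) = Pi.single i (f i) := by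
        intro i; rfl
      simp_rw [this]
      exact (Finset.univ_sum_single f).symm
  | add y z hy hz =>
      simp only [map_add]
      rw [Finset.sum_add_distrib]
      exact congrArg₂ (· + ·) hy hz

lemma span_one_tmul_top (hv : Submodule.span A (Set.range v) = ⊤)
    (D : Type u) [CommRing D] [Algebra A D] :
    Submodule.span D (Set.range fun i => ((1 : D) ⊗ₜ[A] v i : D ⊗[A] N)) = ⊤ := by
  rw [eq_top_iff]
  rintro w -
  induction w using TensorProduct.induction_on with
  | zero => exact Submodule.zero_mem _
  | tmul d m =>
      have hm : m ∈ Submodule.span A (Set.range v) := hv ▸ Submodule.mem_top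
      induction hm using Submodule.span_induction with
      | mem z hz =>
          obtain ⟨i, rfl⟩ := hz
          have : d ⊗ₜ[A] v i = d • ((1 : D) ⊗ₜ[A] v i) := by
            rw [TensorProduct.smul_tmul']; simp
          rw [this]
          exact Submodule.smul_mem _ d (Submodule.subset_span ⟨i, rfl⟩)
      | zero => simp
      | add y z _ _ hy hz => rw [TensorProduct.tmul_add]; exact Submodule.add_mem _ hy hz
      | smul a y _ hy =>
          rw [TensorProduct.tmul_smul, ← algebraMap_smul D a]
          exact Submodule.smul_mem _ _ hy
  | add y z hy hz => exact Submodule.add_mem _ hy hz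

lemma phiD_eq_zero_iff (hv : Submodule.span A (Set.range v) = ⊤)
    (D : Type u) [CommRing D] [Algebra A D] (x : D ⊗[A] ↥TA) :
    phiD TA D x = 0 ↔ (iotaB TA v).baseChange D x = 0 := by
  constructor
  · intro h
    rw [tensor_pi_eq_sum (A := A) D ((iotaB TA v).baseChange D x)]
    have : ∀ i : Fin k,
        (LinearMap.proj i : (Fin k → N) →ₗ[A] N).baseChange D
          ((iotaB TA v).baseChange D x) = 0 := by
      intro i
      rw [← phiD_component, h]
      rfl
    simp [this]
  · intro h
    apply LinearMap.ext
    intro w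
    have hw : w ∈ Submodule.span D (Set.range fun i => ((1 : D) ⊗ₜ[A] v i : D ⊗[A] N)) :=
      (span_one_tmul_top v hv D) ▸ Submodule.mem_top
    induction hw using Submodule.span_induction with
    | mem z hz =>
        obtain ⟨i, rfl⟩ := hz
        rw [phiD_component TA v D x i, h]
        simp
    | zero => simp
    | add y z _ _ hy hz => simp [map_add, hy, hz]
    | smul d y _ hy => rw [map_smul, hy, LinearMap.zero_apply, smul_zero]; rfl

lemma finite_TA [IsNoetherianRing A] [Module.Finite A N]
    (hv : Submodule.span A (Set.range v) = ⊤) : Module.Finite A ↥TA := by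
  have hinj : Function.Injective
      (LinearMap.pi (fun i => LinearMap.applyₗ (v i)) :
        Module.End A N →ₗ[A] (Fin k → N)) := by
    intro f g h
    apply LinearMap.ext
    intro m
    have hm : m ∈ Submodule.span A (Set.range v) := hv ▸ Submodule.mem_top
    induction hm using Submodule.span_induction with
    | mem z hz =>
        obtain ⟨i, rfl⟩ := hz
        exact congrFun h i
    | zero => simp
    | add y z _ _ hy hz => simp [map_add, hy, hz]
    | smul a y _ hy => simp [map_smul, hy]
  have hE : IsNoetherian A (Module.End A N) := isNoetherian_of_injective _ hinj
  have hTA : IsNoetherian A ↥TA :=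
    isNoetherian_of_injective TA.val.toLinearMap Subtype.val_injective
  exact Module.Finite.of_surjective (LinearMap.id (R := A) (M := ↥TA))
    Function.surjective_id


section Words

variable {R S : Type u} [CommRing R] [Ring S] [Algebra R S]

lemma mul_words {s : ℕ} (x : Fin s → S) (m : ℕ)
    (u : S) (hu : u ∈ Submodule.span R (Set.range x))
    (w : S) (hw : w ∈ Submodule.span R
      {r : S | ∃ jj : Fin m → Fin s, r = (List.ofFn fun i => x (jj i)).prod}) :
    u * w ∈ Submodule.span R
      {r : S | ∃ jj : Fin (m + 1) → Fin s, r = (List.ofFn fun i => x (jj i)).prod} := by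
  induction hu using Submodule.span_induction with
  | mem z hz =>
      obtain ⟨j0, rfl⟩ := hz
      induction hw using Submodule.span_induction with
      | mem r hr =>
          obtain ⟨jj, rfl⟩ := hr
          refine Submodule.subset_span ⟨Fin.cons j0 jj, ?_⟩
          rw [List.ofFn_succ]
          simp only [Fin.cons_zero, Fin.cons_succ, List.prod_cons]
      | zero => rw [mul_zero]; exact Submodule.zero_mem _
      | add a b _ _ ha hb => rw [mul_add]; exact Submodule.add_mem _ ha hb
      | smul c a _ ha => rw [mul_smul_comm]; exact Submodule.smul_mem _ _ ha
  | zero => rw [zero_mul]; exact Submodule.zero_mem _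
  | add a b _ _ ha hb => rw [add_mul]; exact Submodule.add_mem _ ha hb
  | smul c a _ ha => rw [smul_mul_assoc]; exact Submodule.smul_mem _ _ ha

lemma prod_mem_span_words {s : ℕ} (x : Fin s → S) :
    ∀ (L : List S), (∀ y ∈ L, y ∈ Submodule.span R (Set.range x)) →
      L.prod ∈ Submodule.span R
        {r : S | ∃ jj : Fin L.length → Fin s, r = (List.ofFn fun i => x (jj i)).prod} := by
  intro L
  induction L with
  | nil =>
      intro _
      refine Submodule.subset_span ⟨Fin.elim0, ?_⟩
      simp
  | cons y L' ih =>
      intro hmem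
      have h1 : y ∈ Submodule.span R (Set.range x) := hmem y List.mem_cons_self
      have h2 := ih (fun z hz => hmem z (List.mem_cons_of_mem y hz))
      simpa using mul_words (R := R) x L'.length y h1 L'.prod h2

end Words

section Descend

variable {A : Type u} [CommRing A]
  {N : Type u} [AddCommGroup N] [Module A N]
  (TA : Subalgebra A (Module.End A N)) {k : ℕ} (v : Fin k → N)

/-- Any element of `A' ⊗ TA` killed by the base change of `iotaB` already comes from
a finitely generated subalgebra of `A'`, with the same vanishing. -/
lemma exists_descend [Module.Finite A N] (A' : Type u) [CommRing A'] [Algebra A A']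
    (x0 : A' ⊗[A] ↥TA) (hx0 : (iotaB TA v).baseChange A' x0 = 0) :
    ∃ Y : Finset A', ∀ (C : Subalgebra A A'), (↑Y : Set A') ⊆ ↑C →
      ∃ x' : ↥C ⊗[A] ↥TA,
        Algebra.TensorProduct.map C.val (AlgHom.id A ↥TA) x' = x0 ∧
        (iotaB TA v).baseChange ↥C x' = 0 := by
  classical
  obtain ⟨S, hS⟩ := TensorProduct.exists_finset x0
  obtain ⟨r, w, hw⟩ := Module.Finite.exists_fin (R := A) (M := (Fin k → N))
  set mfam : (↥S ⊕ ULift.{u} (Fin r)) → (Fin k → N) :=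
    Sum.elim (fun p : ↥S => iotaB TA v p.1.2) (fun l => w l.down) with hmfam
  set nfam : (↥S ⊕ ULift.{u} (Fin r)) → A' :=
    Sum.elim (fun p : ↥S => p.1.1) (fun _ => (0 : A')) with hnfam
  have hvan : TensorProduct.VanishesTrivially A mfam nfam := by
    apply TensorProduct.vanishesTrivially_of_sum_tmul_eq_zero
    · rw [eq_top_iff, ← hw]
      refine Submodule.span_mono ?_
      rintro _ ⟨l, rfl⟩
      exact ⟨Sum.inr ⟨l⟩, rfl⟩
    · rw [Fintype.sum_sum_type]
      simp only [hmfam, hnfam, Sum.elim_inl, Sum.elim_inr, TensorProduct.tmul_zero,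
        Finset.sum_const_zero, add_zero]
      have hkey : (∑ p : ↥S, (iotaB TA v p.1.2) ⊗ₜ[A] p.1.1)
          = (TensorProduct.comm A A' (Fin k → N)) ((iotaB TA v).baseChange A' x0) := by
        rw [hS, map_sum, map_sum]
        simp only [LinearMap.baseChange_tmul, TensorProduct.comm_tmul]
        rw [← Finset.sum_attach S (fun p => (iotaB TA v p.2) ⊗ₜ[A] p.1)]
        rfl
      rw [hkey, hx0, map_zero]
  obtain ⟨κ, afun, yfun, h1, h2⟩ := hvan
  refine ⟨Finset.image yfun Finset.univ, ?_⟩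
  intro C hYC
  have hyC : ∀ l : Fin κ, yfun l ∈ C := by
    intro l
    exact hYC (Finset.mem_coe.mpr (Finset.mem_image_of_mem yfun (Finset.mem_univ l)))
  set yC : Fin κ → ↥C := fun l => ⟨yfun l, hyC l⟩ with hyCdef
  set uC : (↥S ⊕ ULift.{u} (Fin r)) → ↥C := fun i => ∑ l : Fin κ, afun i l • yC l with huC
  have hval : ∀ i, (uC i : A') = nfam i := by
    intro i
    have : ((∑ l : Fin κ, afun i l • yC l : ↥C) : A') = ∑ l : Fin κ, afun i l • yfun l := by
      rw [AddSubmonoidClass.coe_finset_sum]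
      rfl
    rw [huC, this]
    exact (h1 i).symm
  refine ⟨∑ p : ↥S, uC (Sum.inl p) ⊗ₜ[A] p.1.2, ?_, ?_⟩
  · rw [map_sum]
    simp only [Algebra.TensorProduct.map_tmul, AlgHom.coe_id, id_eq, Subalgebra.coe_val]
    have : ∀ p : ↥S, ((uC (Sum.inl p) : A') ⊗ₜ[A] p.1.2 : A' ⊗[A] ↥TA)
        = p.1.1 ⊗ₜ[A] p.1.2 := by
      intro p
      rw [hval (Sum.inl p)]
      rfl
    rw [Finset.sum_congr rfl (fun p _ => this p)]
    rw [hS, ← Finset.sum_attach S (fun p => p.1 ⊗ₜ[A] p.2)]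
    rfl
  · have hzero_inr : ∀ l : ULift.{u} (Fin r), uC (Sum.inr l) = 0 := by
      intro l
      apply Subtype.ext
      rw [hval (Sum.inr l)]
      rfl
    have hfull : (∑ i : (↥S ⊕ ULift.{u} (Fin r)), uC i ⊗ₜ[A] mfam i) = 0 := by
      have hterm : ∀ i, uC i ⊗ₜ[A] mfam i = ∑ l : Fin κ, yC l ⊗ₜ[A] (afun i l • mfam i) := by
        intro i
        rw [huC, TensorProduct.sum_tmul]
        exact Finset.sum_congr rfl (fun l _ => TensorProduct.smul_tmul _ _ _)
      rw [Finset.sum_congr rfl (fun i _ => hterm i), Finset.sum_comm]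
      have : ∀ l : Fin κ, (∑ i : (↥S ⊕ ULift.{u} (Fin r)), yC l ⊗ₜ[A] (afun i l • mfam i)) = 0 := by
        intro l
        rw [← TensorProduct.tmul_sum, h2 l, TensorProduct.tmul_zero]
      rw [Finset.sum_congr rfl (fun l _ => this l), Finset.sum_const_zero]
    rw [map_sum]
    simp only [LinearMap.baseChange_tmul]
    rw [Fintype.sum_sum_type] at hfull
    have h0 : (∑ l : ULift.{u} (Fin r), uC (Sum.inr l) ⊗ₜ[A] mfam (Sum.inr l)) = 0 := by
      refine Finset.sum_eq_zero (fun l _ => ?_)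
      rw [hzero_inr l, TensorProduct.zero_tmul]
    rw [h0, add_zero] at hfull
    exact hfull

end Descend

section WordVanish

variable {A : Type u} [CommRing A]
  {N : Type u} [AddCommGroup N] [Module A N]
  (TA : Subalgebra A (Module.End A N)) {k : ℕ} (v : Fin k → N)

/-- Main Artin–Rees step: long products of elements of `At ⊗ TA` whose image in `C ⊗ TA`
is killed by `iotaB.baseChange C` are themselves killed by the base change map to `C`. -/
lemma word_vanish (hv : Submodule.span A (Set.range v) = ⊤)
    [Module.Finite A N] [Module.Finite A ↥TA]
    (At : Type u) [CommRing At] [IsNoetherianRing At] [Algebra A At] [Module.Flat A At]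
    (C : Type u) [CommRing C] [Algebra A C]
    (h : At →ₐ[A] C) (hs : Function.Surjective h) :
    ∃ n : ℕ, ∀ (ξ : Fin n → At ⊗[A] ↥TA),
      (∀ i, (iotaB TA v).baseChange C
          (Algebra.TensorProduct.map h (AlgHom.id A ↥TA) (ξ i)) = 0) →
      Algebra.TensorProduct.map h (AlgHom.id A ↥TA) ((List.ofFn ξ).prod) = 0 := by
  classical
  set ι := iotaB TA v with hιdef
  set gm := Algebra.TensorProduct.map h (AlgHom.id A ↥TA) with hgm
  set a : Ideal At := RingHom.ker h.toRingHom with ha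
  set θ := phiD TA At with hθ
  -- the commuting square
  have hsq : ∀ ξ0 : At ⊗[A] ↥TA,
      LinearMap.rTensor (Fin k → N) h.toLinearMap (ι.baseChange At ξ0) = ι.baseChange C (gm ξ0) := by
    intro ξ0
    induction ξ0 using TensorProduct.induction_on with
    | zero => simp
    | tmul q b =>
        simp [hgm, LinearMap.baseChange_tmul, LinearMap.rTensor_tmul,
          Algebra.TensorProduct.map_tmul]
    | add y z hy hz => simp only [map_add, hy, hz]
  -- kernel of rTensor h is a • ⊤
  have hkerr : ∀ w0 : At ⊗[A] (Fin k → N), LinearMap.rTensor (Fin k → N) h.toLinearMap w0 = 0 →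
      w0 ∈ (a • ⊤ : Submodule At (At ⊗[A] (Fin k → N))) := by
    intro w0 hw0
    have hex : Function.Exact ((a.restrictScalars A).subtype) h.toLinearMap := by
      intro q
      constructor
      · intro hq
        exact ⟨⟨q, hq⟩, rfl⟩
      · rintro ⟨p, rfl⟩
        exact p.2
    have hT := rTensor_exact (R := A) (Fin k → N) hex hs
    have hw1 : w0 ∈ Set.range (LinearMap.rTensor (Fin k → N) (a.restrictScalars A).subtype) :=
      (hT w0).mp hw0
    obtain ⟨z, rfl⟩ := hw1
    clear hw0
    induction z using TensorProduct.induction_on with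
    | zero => simp
    | tmul q p =>
        rw [LinearMap.rTensor_tmul]
        have : ((a.restrictScalars A).subtype q) ⊗ₜ[A] p
            = (q : At) • ((1 : At) ⊗ₜ[A] p) := by
          rw [TensorProduct.smul_tmul']
          simp
        rw [this]
        exact Submodule.smul_mem_smul q.2 Submodule.mem_top
    | add y z hy hz =>
        rw [map_add]
        exact Submodule.add_mem _ (by simpa using hy) (by simpa using hz)
  -- θ of kernel elements maps everything into a • ⊤
  have hθmem : ∀ (ξ0 : At ⊗[A] ↥TA), ι.baseChange At ξ0 ∈ (a • ⊤ : Submodule At (At ⊗[A] (Fin k → N))) →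
      ∀ u : At ⊗[A] N, θ ξ0 u ∈ (a • ⊤ : Submodule At (At ⊗[A] N)) := by
    intro ξ0 hξ0 u
    have hgen : ∀ i : Fin k, θ ξ0 ((1 : At) ⊗ₜ[A] v i) ∈ (a • ⊤ : Submodule At (At ⊗[A] N)) := by
      intro i
      rw [hθ, phiD_component TA v At ξ0 i]
      have hmm := Submodule.mem_map_of_mem
        (f := (LinearMap.proj i : (Fin k → N) →ₗ[A] N).baseChange At) hξ0
      rw [Submodule.map_smul''] at hmm
      exact SetLike.le_def.mp (smul_mono_right _ le_top) hmm
    have hu : u ∈ Submodule.span At (Set.range fun i => ((1 : At) ⊗ₜ[A] v i : At ⊗[A] N)) :=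
      (span_one_tmul_top v hv At) ▸ Submodule.mem_top
    induction hu using Submodule.span_induction with
    | mem z hz =>
        obtain ⟨i, rfl⟩ := hz
        exact hgen i
    | zero => rw [map_zero]; exact Submodule.zero_mem _
    | add y z _ _ hy hz => rw [map_add]; exact Submodule.add_mem _ hy hz
    | smul d y _ hy =>
        rw [map_smul]
        exact Submodule.smul_mem _ d hy
  -- iterating
  have hstep : ∀ (ξ0 : At ⊗[A] ↥TA),
      (∀ u : At ⊗[A] N, θ ξ0 u ∈ (a • ⊤ : Submodule At (At ⊗[A] N))) →
      ∀ (m : ℕ) (u : At ⊗[A] N), u ∈ (a ^ m • ⊤ : Submodule At (At ⊗[A] N)) →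
        θ ξ0 u ∈ (a ^ (m + 1) • ⊤ : Submodule At (At ⊗[A] N)) := by
    intro ξ0 hξ0 m u hu
    have hrw : (a ^ (m + 1) • ⊤ : Submodule At (At ⊗[A] N)) = a ^ m • (a • ⊤) := by
      rw [pow_succ, mul_smul]
    rw [hrw]
    refine Submodule.smul_induction_on hu ?_ ?_
    · intro rr hrr z _
      rw [map_smul]
      exact Submodule.smul_mem_smul hrr (hξ0 z)
    · intro y z hy hz
      rw [map_add]
      exact Submodule.add_mem _ hy hz
  have hlistprod : ∀ (L : List (At ⊗[A] ↥TA)),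
      (∀ ξ0 ∈ L, ∀ u : At ⊗[A] N, θ ξ0 u ∈ (a • ⊤ : Submodule At (At ⊗[A] N))) →
      ∀ u : At ⊗[A] N, θ L.prod u ∈ (a ^ L.length • ⊤ : Submodule At (At ⊗[A] N)) := by
    intro L
    induction L with
    | nil =>
        intro _ u
        rw [List.prod_nil, map_one]
        rw [List.length_nil, pow_zero, Ideal.one_eq_top, Submodule.top_smul]
        exact Submodule.mem_top
    | cons ξ0 L' ih =>
        intro hL u
        rw [List.prod_cons, map_mul]
        have h1 := ih (fun z hz => hL z (List.mem_cons_of_mem ξ0 hz)) u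
        rw [List.length_cons]
        exact hstep ξ0 (hL ξ0 List.mem_cons_self) L'.length _ h1
  -- Artin-Rees
  obtain ⟨e, hAR⟩ := Ideal.exists_pow_inf_eq_pow_smul a (LinearMap.range (ι.baseChange At))
  refine ⟨e + 1, ?_⟩
  intro ξ hξ
  have hXa : ∀ i, ι.baseChange At (ξ i) ∈ (a • ⊤ : Submodule At (At ⊗[A] (Fin k → N))) := by
    intro i
    exact hkerr (ι.baseChange At (ξ i)) (by rw [hsq (ξ i), hξ i])
  set L := List.ofFn ξ with hL
  have hLmem : ∀ ξ0 ∈ L, ∀ u : At ⊗[A] N,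
      θ ξ0 u ∈ (a • ⊤ : Submodule At (At ⊗[A] N)) := by
    intro ξ0 hξ0 u
    rw [hL, List.mem_ofFn] at hξ0
    obtain ⟨i, rfl⟩ := hξ0
    exact hθmem (ξ i) (hXa i) u
  have hθL := hlistprod L hLmem
  have hlen : L.length = e + 1 := by simp [hL]
  rw [hlen] at hθL
  -- components of ι.baseChange At L.prod lie in a^(e+1) • ⊤
  have hιL : ι.baseChange At L.prod ∈ (a ^ (e + 1) • ⊤ : Submodule At (At ⊗[A] (Fin k → N))) := by
    rw [tensor_pi_eq_sum (A := A) At (ι.baseChange At L.prod)]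
    refine Submodule.sum_mem _ ?_
    intro i _
    have h1 : (LinearMap.proj i : (Fin k → N) →ₗ[A] N).baseChange At (ι.baseChange At L.prod)
        ∈ (a ^ (e + 1) • ⊤ : Submodule At (At ⊗[A] N)) := by
      rw [← phiD_component TA v At L.prod i]
      exact hθL _
    have hmm := Submodule.mem_map_of_mem
      (f := (LinearMap.single A (fun _ : Fin k => N) i).baseChange At) h1
    rw [Submodule.map_smul''] at hmm
    exact SetLike.le_def.mp (smul_mono_right _ le_top) hmm
  -- Artin-Rees gives membership in a • range
  have hmem2 : ι.baseChange At L.prod ∈ a • (LinearMap.range (ι.baseChange At)) := by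
    have hboth : ι.baseChange At L.prod
        ∈ (a ^ (e + 1) • ⊤ ⊓ LinearMap.range (ι.baseChange At) :
            Submodule At (At ⊗[A] (Fin k → N))) :=
      ⟨hιL, ⟨L.prod, rfl⟩⟩
    rw [hAR (e + 1) (by omega)] at hboth
    have h2 : e + 1 - e = 1 := by omega
    rw [h2, pow_one] at hboth
    exact SetLike.le_def.mp (smul_mono_right _ inf_le_right) hboth
  have hrange : (a • LinearMap.range (ι.baseChange At) : Submodule At (At ⊗[A] (Fin k → N)))
      = Submodule.map (ι.baseChange At) (a • ⊤) := by
    rw [Submodule.map_smul'', Submodule.map_top]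
  rw [hrange] at hmem2
  obtain ⟨z, hz, hzeq⟩ := hmem2
  have hinj : Function.Injective (ι.baseChange At) := by
    have h0 : Function.Injective ι := iotaB_injective TA v hv
    show Function.Injective (⇑(ι.baseChange At))
    rw [LinearMap.baseChange_eq_ltensor]
    exact Module.Flat.lTensor_preserves_injective_linearMap (M := At) ι h0
  have hW : L.prod ∈ (a • ⊤ : Submodule At (At ⊗[A] ↥TA)) := by
    rwa [hinj hzeq] at hz
  -- the image under gm vanishes
  have hsmul : ∀ (rr : At) (z0 : At ⊗[A] ↥TA), gm (rr • z0) = h rr • gm z0 := by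
    intro rr z0
    induction z0 using TensorProduct.induction_on with
    | zero => simp
    | tmul q b =>
        rw [TensorProduct.smul_tmul']
        rw [hgm]
        simp only [Algebra.TensorProduct.map_tmul, AlgHom.coe_id, id_eq]
        rw [TensorProduct.smul_tmul']
        rw [smul_eq_mul, smul_eq_mul, map_mul]
    | add y z hy hz => rw [smul_add, map_add, map_add, hy, hz, smul_add]
  refine Submodule.smul_induction_on hW ?_ ?_
  · intro rr hrr z0 _
    rw [hsmul rr z0]
    have h0 : h rr = 0 := hrr
    rw [h0, zero_smul]
  · intro y z hy hz
    rw [map_add, hy, hz, add_zero]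

end WordVanish


section KerNilpotent

variable {A : Type u} [CommRing A]
  {N : Type u} [AddCommGroup N] [Module A N]

theorem ker_nilpotent [IsNoetherianRing A] [Module.Finite A N]
    (TA : Subalgebra A (Module.End A N))
    (A' : Type u) [CommRing A'] [IsNoetherianRing A'] [Algebra A A'] :
    ∃ n : ℕ, ∀ g : Fin n → (A' ⊗[A] ↥TA),
      (∀ i, phiD TA A' (g i) = 0) → (List.ofFn g).prod = 0 := by
  classical
  obtain ⟨k, v, hv⟩ := Module.Finite.exists_fin (R := A) (M := N)
  haveI hfin : Module.Finite A ↥TA := finite_TA TA v hv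
  obtain ⟨s, x, hx⟩ := Submodule.fg_iff_exists_fin_generating_family.mp
    (IsNoetherian.noetherian (LinearMap.ker ((iotaB TA v).baseChange A')))
  have hxker : ∀ j, (iotaB TA v).baseChange A' (x j) = 0 := by
    intro j
    have hj : x j ∈ LinearMap.ker ((iotaB TA v).baseChange A') := by
      rw [← hx]; exact Submodule.subset_span ⟨j, rfl⟩
    exact hj
  have hdes := fun j => exists_descend TA v A' (x j) (hxker j)
  choose Y hY using hdes
  set C : Subalgebra A A' := Algebra.adjoin A (↑(Finset.univ.biUnion Y) : Set A') with hC
  have hsubY : ∀ j, (↑(Y j) : Set A') ⊆ ↑C := by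
    intro j y hy
    exact Algebra.subset_adjoin
      (Finset.mem_coe.mpr (Finset.mem_biUnion.mpr ⟨j, Finset.mem_univ j, hy⟩))
  choose x' hx'val hx'ker using fun j => hY j C (hsubY j)
  -- presentation of C
  set YY : Finset A' := Finset.univ.biUnion Y with hYY
  set z : Fin YY.card → A' := fun i => (YY.equivFin.symm i : A') with hzdef
  have hzC : ∀ i, z i ∈ C := fun i => Algebra.subset_adjoin (YY.equivFin.symm i).2
  set zC : Fin YY.card → ↥C := fun i => ⟨z i, hzC i⟩ with hzCdef
  set h : MvPolynomial (Fin YY.card) A →ₐ[A] ↥C := MvPolynomial.aeval zC with hh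
  have hzrange : Set.range z = (↑YY : Set A') := by
    ext y
    constructor
    · rintro ⟨i, rfl⟩
      exact (YY.equivFin.symm i).2
    · intro hy
      exact ⟨YY.equivFin ⟨y, hy⟩, by simp [hzdef]⟩
  have hrange : h.range = ⊤ := by
    apply Subalgebra.map_injective (f := C.val) Subtype.val_injective
    rw [hh, ← Algebra.adjoin_range_eq_range_aeval, Algebra.map_top, Subalgebra.range_val,
      AlgHom.map_adjoin]
    have himg : (C.val : ↥C →ₐ[A] A') '' Set.range zC = Set.range z := by
      rw [← Set.range_comp]
      rfl
    rw [himg, hzrange, hC]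
  have hs : Function.Surjective h := (AlgHom.range_eq_top h).mp hrange
  obtain ⟨n, hn⟩ := word_vanish TA v hv (MvPolynomial (Fin YY.card) A) ↥C h hs
  have hgsurj : Function.Surjective (Algebra.TensorProduct.map h (AlgHom.id A ↥TA)) := by
    intro ξ
    induction ξ using TensorProduct.induction_on with
    | zero => exact ⟨0, map_zero _⟩
    | tmul c b =>
        obtain ⟨q, rfl⟩ := hs c
        exact ⟨q ⊗ₜ[A] b, by simp [Algebra.TensorProduct.map_tmul]⟩
    | add y1 y2 hy1 hy2 =>
        obtain ⟨y1', rfl⟩ := hy1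
        obtain ⟨y2', rfl⟩ := hy2
        exact ⟨y1' + y2', map_add _ _ _⟩
  choose X hX using fun j => hgsurj (x' j)
  have hword : ∀ jj : Fin n → Fin s, (List.ofFn fun i => x (jj i)).prod = 0 := by
    intro jj
    have h0 := hn (fun i => X (jj i)) (fun i => by rw [hX (jj i), hx'ker (jj i)])
    have hfun : (fun i : Fin n => x (jj i))
        = (⇑(Algebra.TensorProduct.map C.val (AlgHom.id A ↥TA)) ∘
           ⇑(Algebra.TensorProduct.map h (AlgHom.id A ↥TA)) ∘ fun i => X (jj i)) := by
      funext i
      simp only [Function.comp_apply]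
      rw [hX (jj i), hx'val (jj i)]
    have hxprod : (List.ofFn fun i => x (jj i)).prod
        = (Algebra.TensorProduct.map C.val (AlgHom.id A ↥TA))
            ((Algebra.TensorProduct.map h (AlgHom.id A ↥TA))
              ((List.ofFn fun i => X (jj i)).prod)) := by
      rw [map_list_prod, map_list_prod, List.map_ofFn, List.map_ofFn, ← hfun]
    rw [hxprod, h0, map_zero]
  refine ⟨n, ?_⟩
  intro g hg
  have hgK : ∀ i, g i ∈ Submodule.span A' (Set.range x) := by
    intro i
    rw [hx]
    exact LinearMap.mem_ker.mpr ((phiD_eq_zero_iff TA v hv A' (g i)).mp (hg i))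
  have hmem := prod_mem_span_words (R := A') x (List.ofFn g)
    (by intro y hy; rw [List.mem_ofFn] at hy; obtain ⟨i, rfl⟩ := hy; exact hgK i)
  have hlen : (List.ofFn g).length = n := by simp
  rw [hlen] at hmem
  have hbot : (List.ofFn g).prod ∈ (⊥ : Submodule A' (A' ⊗[A] ↥TA)) := by
    refine (Submodule.span_le.mpr ?_) hmem
    rintro r ⟨jj, rfl⟩
    simp [hword jj]
  simpa using hbot

end KerNilpotent

section RangeInj

variable {A : Type u} [CommRing A]
  {N : Type u} [AddCommGroup N] [Module A N]

lemma phiD_injective_of_flat (TA : Subalgebra A (Module.End A N)) {k : ℕ} (v : Fin k → N)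
    (hv : Submodule.span A (Set.range v) = ⊤)
    (A' : Type u) [CommRing A'] [Algebra A A'] [Module.Flat A A'] :
    Function.Injective (phiD TA A') := by
  have hinj : Function.Injective ((iotaB TA v).baseChange A') := by
    have h0 : Function.Injective (iotaB TA v) := iotaB_injective TA v hv
    show Function.Injective (⇑((iotaB TA v).baseChange A'))
    rw [LinearMap.baseChange_eq_ltensor]
    exact Module.Flat.lTensor_preserves_injective_linearMap (M := A') (iotaB TA v) h0
  intro x y hxy
  have hsub : phiD TA A' (x - y) = 0 := by rw [map_sub, hxy, sub_self]
  have h0 := (phiD_eq_zero_iff TA v hv A' (x - y)).mp hsub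
  have h1 : (iotaB TA v).baseChange A' (x - y) = (iotaB TA v).baseChange A' 0 := by
    rw [h0, map_zero]
  have := hinj h1
  rwa [sub_eq_zero] at this

lemma phiD_range {T : Type u} [Ring T] (ψ : T →+* Module.End A N)
    (A' : Type u) [CommRing A'] [Algebra A A'] :
    (phiD (Algebra.adjoin A (Set.range fun t : T => ψ t)) A').range
      = Algebra.adjoin A' (Set.range fun t : T => LinearMap.baseChange A' (ψ t)) := by
  set TA := Algebra.adjoin A (Set.range fun t : T => ψ t) with hTA
  apply le_antisymm
  · rintro y0 ⟨x, rfl⟩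
    induction x using TensorProduct.induction_on with
    | zero => rw [map_zero]; exact Subalgebra.zero_mem _
    | tmul d b =>
        show phiD TA A' (d ⊗ₜ[A] b) ∈ _
        rw [phiD_tmul]
        refine Subalgebra.smul_mem _ ?_ d
        have hb : (b : Module.End A N) ∈ Algebra.adjoin A (Set.range fun t : T => ψ t) :=
          b.2
        refine Algebra.adjoin_induction ?_ ?_ ?_ ?_ hb
        · rintro e ⟨t0, rfl⟩
          exact Algebra.subset_adjoin ⟨t0, rfl⟩
        · intro r
          have heq : LinearMap.baseChange A' (algebraMap A (Module.End A N) r)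
              = algebraMap A (Module.End A' (A' ⊗[A] N)) r :=
            (Module.End.baseChangeHom A A' N).commutes r
          rw [heq, IsScalarTower.algebraMap_apply A A' (Module.End A' (A' ⊗[A] N))]
          exact Subalgebra.algebraMap_mem _ _
        · intro e1 e2 _ _ he1 he2
          rw [LinearMap.baseChange_add]
          exact Subalgebra.add_mem _ he1 he2
        · intro e1 e2 _ _ he1 he2
          rw [LinearMap.baseChange_mul]
          exact Subalgebra.mul_mem _ he1 he2
    | add y1 y2 hy1 hy2 =>
        rw [map_add]
        exact Subalgebra.add_mem _ hy1 hy2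
  · rw [Algebra.adjoin_le_iff]
    rintro y0 ⟨t0, rfl⟩
    have hmem : (ψ t0 : Module.End A N) ∈ TA := by
      rw [hTA]; exact Algebra.subset_adjoin ⟨t0, rfl⟩
    refine ⟨(1 : A') ⊗ₜ[A] ⟨ψ t0, hmem⟩, ?_⟩
    show phiD TA A' ((1 : A') ⊗ₜ[A] ⟨ψ t0, hmem⟩) = _
    rw [phiD_tmul]
    simp

end RangeInj

end HeckeBaseChangeAux

set_option synthInstance.maxHeartbeats 2000000 in
theorem hecke_algebra_base_change
    {A A' T : Type u} [CommRing A] [CommRing A'] [Ring T]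
    [IsNoetherianRing A] [IsNoetherianRing A'] [Algebra A A']
    {N : Type u} [AddCommGroup N] [Module A N] [Module.Finite A N]
    (ψ : T →+* Module.End A N) :
    letI TA : Subalgebra A (Module.End A N) :=
      Algebra.adjoin A (Set.range fun t : T => ψ t)
    ∀ Φ : (A' ⊗[A] ↥TA) →ₐ[A'] Module.End A' (A' ⊗[A] N),
      Φ = Algebra.TensorProduct.lift
            (Algebra.ofId A' (Module.End A' (A' ⊗[A] N)))
            ((Module.End.baseChangeHom A A' N).comp TA.val)
            (fun x y => Algebra.commutes x _) →
      (Φ.range =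
        Algebra.adjoin A' (Set.range fun t : T => LinearMap.baseChange A' (ψ t))) ∧
      (∃ n : ℕ, ∀ g : Fin n → (A' ⊗[A] ↥TA),
        (∀ i, Φ (g i) = 0) → (List.ofFn g).prod = 0) ∧
      (Module.Flat A A' → Function.Injective Φ) := by
  intro Φ hΦ
  have hPhi : Φ = HeckeBaseChangeAux.phiD
      (Algebra.adjoin A (Set.range fun t : T => ψ t)) A' := hΦ
  subst hPhi
  obtain ⟨k, v, hv⟩ := Module.Finite.exists_fin (R := A) (M := N)
  refine ⟨HeckeBaseChangeAux.phiD_range ψ A',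
    HeckeBaseChangeAux.ker_nilpotent _ A', ?_⟩
  intro hflat
  haveI := hflat
  exact HeckeBaseChangeAux.phiD_injective_of_flat _ v hv A'
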